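/- If a is a non-invertible transformation of {1,...,n} of rank k and x, y are both in the image of a, then a∘(x y) is a product of a with three idempotent transformations each of rank k. -/

import Mathlib

/-- The full transformation monoid on `{1,...,n}`, modeled as `Function.End (Fin n)`
(multiplication is composition). -/
abbrev Tn (n : ℕ) := Function.End (Fin n)

/-- A permutation viewed as a transformation. -/
def ofPerm {n : ℕ} (g : Equiv.Perm (Fin n)) : Tn n := ⇑g

/-- The rank of a transformation: the size of its image. -/
def rnk {n : ℕ} (a : Tn n) : ℕ := (Finset.univ.image a).card

/-- The symmetric group embedded in `Tn n` as a set. -/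
def perms (n : ℕ) : Set (Tn n) := Set.range (fun g : Equiv.Perm (Fin n) => ofPerm g)

/-- The `S_n`-conjugacy class of a transformation. -/
def conjClass {n : ℕ} (t : Tn n) : Set (Tn n) :=
  {s | ∃ g : Equiv.Perm (Fin n), s = ofPerm g⁻¹ * t * ofPerm g}

/-- If `x, y` are both in the image of `a`, then `a∘(x y)` is `a` followed by three
idempotents of rank `k`. -/
theorem stmt4 (n k : ℕ) (a : Tn n) (ha : ¬ Function.Bijective a) (hk : rnk a = k)
    (x y : Fin n) (hxy : x ≠ y) (hx : x ∈ Set.range a) (hy : y ∈ Set.range a) :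
    ∃ e₁ e₂ e₃ : Tn n, (e₁ * e₁ = e₁ ∧ rnk e₁ = k) ∧ (e₂ * e₂ = e₂ ∧ rnk e₂ = k) ∧
      (e₃ * e₃ = e₃ ∧ rnk e₃ = k) ∧
      ofPerm (Equiv.swap x y) * a = e₃ * e₂ * e₁ * a := by
  classical
  set S : Finset (Fin n) := Finset.univ.image a with hS
  have hkS : S.card = k := hk
  have hxS : x ∈ S := by
    obtain ⟨t, ht⟩ := hx
    exact Finset.mem_image.2 ⟨t, Finset.mem_univ t, ht⟩
  have hyS : y ∈ S := by
    obtain ⟨t, ht⟩ := hy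
    exact Finset.mem_image.2 ⟨t, Finset.mem_univ t, ht⟩
  have hns : ¬ Function.Surjective a := fun h => ha (Finite.surjective_iff_bijective.mp h)
  unfold Function.Surjective at hns
  push_neg at hns
  obtain ⟨z, hz⟩ := hns
  have hzS : z ∉ S := by
    intro h
    obtain ⟨t, -, ht⟩ := Finset.mem_image.1 h
    exact hz t ht
  have hzx : z ≠ x := fun h => hzS (h ▸ hxS)
  have hzy : z ≠ y := fun h => hzS (h ▸ hyS)
  have hk1 : 1 ≤ k := by
    rw [← hkS]; exact Finset.card_pos.2 ⟨x, hxS⟩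
  set e₁ : Fin n → Fin n := (fun t => if t = x then z else if t ∈ S ∨ t = z then t else z) with he₁
  set e₂ : Fin n → Fin n := (fun t => if t = y then x else if t ∈ S ∨ t = z then t else x) with he₂
  set e₃ : Fin n → Fin n := (fun t => if t = z then y else if t ∈ S then t else y) with he₃
  have hmemS : ∀ t : Fin n, a t ∈ S := fun t => Finset.mem_image.2 ⟨t, Finset.mem_univ t, rfl⟩
  refine ⟨e₁, e₂, e₃, ⟨?_, ?_⟩, ⟨?_, ?_⟩, ⟨?_, ?_⟩, ?_⟩
  · funext t
    show e₁ (e₁ t) = e₁ t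
    simp only [he₁]
    split_ifs with h1 h2 h3 h4 h5 h6 h7 <;> first | rfl |
      (exfalso; first
        | exact hzx h3 | exact hzx h5 | exact h4 (Or.inr rfl) | exact h6 (Or.inr rfl)
        | exact h2 h1 | tauto)
  · show (Finset.univ.image e₁).card = k
    have himg : Finset.univ.image e₁ = insert z (S.erase x) := by
      refine Finset.ext fun b => ?_
      simp only [Finset.mem_image, Finset.mem_insert, Finset.mem_erase, Finset.mem_univ, true_and]
      constructor
      · rintro ⟨t, rfl⟩
        simp only [he₁]
        split_ifs with h1 h2
        · exact Or.inl rfl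
        · rcases h2 with h | h
          · exact Or.inr ⟨h1, h⟩
          · exact Or.inl h
        · exact Or.inl rfl
      · rintro (rfl | ⟨hbx, hbS⟩)
        · exact ⟨x, by simp [he₁]⟩
        · exact ⟨b, by simp [he₁, hbx, hbS]⟩
    rw [himg, Finset.card_insert_of_notMem (fun h => hzS (Finset.mem_of_mem_erase h)),
      Finset.card_erase_of_mem hxS, hkS]
    omega
  · funext t
    show e₂ (e₂ t) = e₂ t
    simp only [he₂]
    split_ifs with h1 h2 h3 h4 h5 h6 h7 <;> first | rfl |
      (exfalso; first
        | exact hxy h3 | exact hxy h5 | exact h4 (Or.inl hxS) | exact h6 (Or.inl hxS)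
        | exact h2 h1 | tauto)
  · show (Finset.univ.image e₂).card = k
    have himg : Finset.univ.image e₂ = insert z (S.erase y) := by
      refine Finset.ext fun b => ?_
      simp only [Finset.mem_image, Finset.mem_insert, Finset.mem_erase, Finset.mem_univ, true_and]
      constructor
      · rintro ⟨t, rfl⟩
        simp only [he₂]
        split_ifs with h1 h2
        · exact Or.inr ⟨hxy, hxS⟩
        · rcases h2 with h | h
          · exact Or.inr ⟨h1, h⟩
          · exact Or.inl h
        · exact Or.inr ⟨hxy, hxS⟩
      · rintro (rfl | ⟨hby, hbS⟩)
        · exact ⟨b, by simp [he₂, hzy]⟩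
        · exact ⟨b, by simp [he₂, hby, hbS]⟩
    rw [himg, Finset.card_insert_of_notMem (fun h => hzS (Finset.mem_of_mem_erase h)),
      Finset.card_erase_of_mem hyS, hkS]
    omega
  · funext t
    show e₃ (e₃ t) = e₃ t
    simp only [he₃]
    split_ifs with h1 h2 h3 h4 h5 h6 h7 <;> first | rfl |
      (exfalso; first
        | exact hzS (h3 ▸ hyS) | exact hzS (h5 ▸ hyS) | exact h4 hyS | exact h6 hyS
        | exact h2 h1 | tauto)
  · show (Finset.univ.image e₃).card = k
    have himg : Finset.univ.image e₃ = S := by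
      refine Finset.ext fun b => ?_
      simp only [Finset.mem_image, Finset.mem_univ, true_and]
      constructor
      · rintro ⟨t, rfl⟩
        simp only [he₃]
        split_ifs with h1 h2
        · exact hyS
        · exact h2
        · exact hyS
      · intro hbS
        have hbz : b ≠ z := fun h => hzS (h ▸ hbS)
        exact ⟨b, by simp [he₃, hbz, hbS]⟩
    rw [himg, hkS]
  · funext t
    show Equiv.swap x y (a t) = e₃ (e₂ (e₁ (a t)))
    have hs : a t ∈ S := hmemS t
    have hsz : a t ≠ z := fun h => hzS (h ▸ hs)
    by_cases h1 : a t = x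
    · rw [h1, Equiv.swap_apply_left]
      simp [he₁, he₂, he₃, hzy, Ne.symm hzx]
    · by_cases h2 : a t = y
      · rw [h2, Equiv.swap_apply_right]
        simp [he₁, he₂, he₃, hyS, hxy, Ne.symm hxy, hxS, Ne.symm hzx, Ne.symm hzy]
      · rw [Equiv.swap_apply_of_ne_of_ne h1 h2]
        simp [he₁, he₂, he₃, h1, h2, hs, hsz]
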